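/- Let n ≥ 1 and let (f_k) be a sequence of holomorphic functions on the open unit ball B of ℂⁿ with sup_k ‖f_k‖ ≤ M < ∞ in the Zygmund norm. If f_k converges to 0 uniformly on every compact subset of B as k → ∞, then lim_{k→∞} sup_{z∈B}|f_k(z)| = 0, i.e. f_k converges to 0 uniformly on all of B. (Lemma 3.) -/

import Mathlib

open MeasureTheory Metric Filter

noncomputable section

/-- `E n` is `ℂⁿ` with the Euclidean structure. -/
abbrev E (n : ℕ) := EuclideanSpace ℂ (Fin n)

/-- The open unit ball of `ℂⁿ`. -/
def uball (n : ℕ) : Set (E n) := Metric.ball 0 1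

/-- The radial derivative `Rf(z) = ∑ z_j ∂f/∂z_j(z)`. -/
def rad (n : ℕ) (f : E n → ℂ) (z : E n) : ℂ :=
  ∑ j : Fin n, z j * fderiv ℂ f z (EuclideanSpace.single j 1)

/-- The set of values `(1-|z|²)|R(Rf)(z)|`, `z ∈ B`. -/
def zygSet (n : ℕ) (f : E n → ℂ) : Set ℝ :=
  {x | ∃ z ∈ uball n, x = (1 - ‖z‖ ^ 2) * ‖rad n (rad n f) z‖}

/-- Membership in the Zygmund space: `sup_{z∈B} (1-|z|²)|R(Rf)(z)| < ∞`. -/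
def memZ (n : ℕ) (f : E n → ℂ) : Prop := BddAbove (zygSet n f)

/-- The Zygmund norm `‖f‖ = |f(0)| + sup_{z∈B} (1-|z|²)|R(Rf)(z)|`. -/
def zygNorm (n : ℕ) (f : E n → ℂ) : ℝ :=
  ‖f 0‖ + sSup (zygSet n f)

/-- The extended Cesàro operator `T_g f(z) = ∫₀¹ f(tz) Rg(tz) dt/t`. -/
def Tg (n : ℕ) (g f : E n → ℂ) (z : E n) : ℂ :=
  ∫ t in (0:ℝ)..1, f (t • z) * rad n g (t • z) / (t : ℂ)

/-- The operator `I_g f(z) = ∫₀¹ Rf(tz) g(tz) dt/t`. -/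
def Ig (n : ℕ) (g f : E n → ℂ) (z : E n) : ℂ :=
  ∫ t in (0:ℝ)..1, rad n f (t • z) * g (t • z) / (t : ℂ)

open Real

set_option maxHeartbeats 1000000
set_option synthInstance.maxHeartbeats 400000

lemma uball_open (n : ℕ) : IsOpen (uball n) := Metric.isOpen_ball

lemma mem_uball {n : ℕ} {w : E n} : w ∈ uball n ↔ ‖w‖ < 1 := by
  simp [uball, Metric.mem_ball, dist_zero_right]

instance (n : ℕ) : MeasurableSpace (E n) := inferInstance
instance (n : ℕ) : BorelSpace (E n) := inferInstance
instance (n : ℕ) : MeasurableSpace (E n →L[ℂ] ℂ) := borel _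
instance (n : ℕ) : BorelSpace (E n →L[ℂ] ℂ) := ⟨rfl⟩

lemma sum_single (n : ℕ) (w : E n) :
    ∑ j : Fin n, w j • EuclideanSpace.single j (1:ℂ) = w := by
  have := (EuclideanSpace.basisFun (Fin n) ℂ).sum_repr w
  simp only [EuclideanSpace.basisFun_apply, EuclideanSpace.basisFun_repr] at this
  exact this

lemma rad_eq (n : ℕ) (g : E n → ℂ) (w : E n) : rad n g w = fderiv ℂ g w w := by
  nth_rewrite 3 [← sum_single n w]
  rw [map_sum]
  simp [rad, smul_eq_mul]

lemma hasDerivAt_dir {n : ℕ} {g : E n → ℂ} (hg : DifferentiableOn ℂ g (uball n)) {u w : E n}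
    {lam : ℂ} (h : u + lam • w ∈ uball n) :
    HasDerivAt (fun l : ℂ => g (u + l • w)) (fderiv ℂ g (u + lam • w) w) lam := by
  have inner : HasDerivAt (fun l : ℂ => u + l • w) w lam := by
    simpa using ((hasDerivAt_id lam).smul_const w).const_add u
  have hF : HasFDerivAt g (fderiv ℂ g (u + lam • w)) (u + lam • w) :=
    (hg.differentiableAt ((uball_open n).mem_nhds h)).hasFDerivAt
  exact hF.comp_hasDerivAt lam inner

lemma opNorm_bound {n : ℕ} {f : E n → ℂ} (hf : DifferentiableOn ℂ f (uball n))
    {B r δ : ℝ} (hδ : 0 < δ) (h1 : r + δ < 1) (hr : 0 ≤ r)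
    (hB : ∀ u ∈ closedBall (0:E n) (r+δ), ‖f u‖ ≤ B)
    {u : E n} (hu : ‖u‖ ≤ r) : ‖fderiv ℂ f u‖ ≤ (2*B+1)/δ := by
  have hB0 : 0 ≤ B := le_trans (norm_nonneg (f 0)) (hB 0 (by simp; positivity))
  have key : ∀ w : E n, ‖w‖ ≤ 1 → ‖fderiv ℂ f u w‖ ≤ (2*B+1)/δ := by
    intro w hw
    have hmem : ∀ lam : ℂ, ‖lam‖ < δ → u + lam • w ∈ uball n := by
      intro lam hlam
      rw [mem_uball]
      calc ‖u + lam • w‖ ≤ ‖u‖ + ‖lam‖ * ‖w‖ := by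
            rw [← norm_smul]; exact norm_add_le _ _
        _ ≤ r + δ * 1 := by gcongr
        _ < 1 := by linarith
    have hmem' : ∀ lam : ℂ, ‖lam‖ < δ → ‖f (u + lam • w)‖ ≤ B := by
      intro lam hlam
      apply hB
      simp only [mem_closedBall, dist_zero_right]
      calc ‖u + lam • w‖ ≤ ‖u‖ + ‖lam‖ * ‖w‖ := by
            rw [← norm_smul]; exact norm_add_le _ _
        _ ≤ r + δ * 1 := by gcongr
        _ = r + δ := by ring
    set φ : ℂ → ℂ := fun l => f (u + l • w) with hφ
    have hd : DifferentiableOn ℂ φ (ball 0 δ) := by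
      intro lam hlam
      rw [mem_ball, dist_zero_right] at hlam
      exact (hasDerivAt_dir hf (hmem lam hlam)).differentiableAt.differentiableWithinAt
    have hmaps : Set.MapsTo φ (ball 0 δ) (ball (φ 0) (2*B+1)) := by
      intro lam hlam
      rw [mem_ball, dist_zero_right] at hlam
      rw [mem_ball]
      have h0 : ‖φ 0‖ ≤ B := by
        have := hmem' 0 (by simpa using hδ)
        simpa [hφ] using this
      calc dist (φ lam) (φ 0) ≤ ‖φ lam‖ + ‖φ 0‖ := dist_le_norm_add_norm _ _
        _ ≤ B + B := add_le_add (hmem' lam hlam) h0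
        _ < 2*B+1 := by linarith
    have hschwarz := Complex.norm_deriv_le_div_of_mapsTo_ball hd (hmaps.mono_right ball_subset_closedBall) hδ
    have hderiv : deriv φ 0 = fderiv ℂ f u w := by
      have := hasDerivAt_dir hf (u := u) (w := w) (lam := 0) (by simpa using hmem 0 (by simpa using hδ))
      simpa using this.deriv
    rwa [hderiv] at hschwarz
  apply ContinuousLinearMap.opNorm_le_bound _ (by positivity)
  intro v
  rcases eq_or_ne v 0 with rfl | hv
  · simp
  · have hnv : (0:ℝ) < ‖v‖ := norm_pos_iff.2 hv
    have : v = (‖v‖ : ℂ) • ((‖v‖ : ℂ)⁻¹ • v) := by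
      rw [smul_smul, mul_inv_cancel₀ (by exact_mod_cast hnv.ne'), one_smul]
    calc ‖fderiv ℂ f u v‖ = ‖v‖ * ‖fderiv ℂ f u ((‖v‖ : ℂ)⁻¹ • v)‖ := by
          nth_rewrite 1 [this]
          rw [(fderiv ℂ f u).map_smul, norm_smul]
          simp
      _ ≤ ‖v‖ * ((2*B+1)/δ) := by
          gcongr
          apply key
          rw [norm_smul]
          simp [hnv.ne']
      _ = (2*B+1)/δ * ‖v‖ := by ring

lemma snd_diff {n : ℕ} {f : E n → ℂ} (hf : DifferentiableOn ℂ f (uball n)) {v : E n}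
    (hv : ‖v‖ ≤ 1) : DifferentiableOn ℂ (fun w => fderiv ℂ f w v) (uball n) := by
  intro w₀ hw₀
  suffices h : DifferentiableAt ℂ (fun w => fderiv ℂ f w v) w₀ from h.differentiableWithinAt
  have hw₀1 : ‖w₀‖ < 1 := mem_uball.1 hw₀
  set a := ‖w₀‖ with ha
  have ha0 : 0 ≤ a := norm_nonneg _
  set ρ : ℝ := (1 - a)/4 with hρ
  have hρpos : 0 < ρ := by rw [hρ]; linarith
  set r₁ : ℝ := a + 2*ρ with hr₁
  -- membership estimates
  have hmem : ∀ x ∈ ball w₀ ρ, ∀ lam : ℂ, ‖lam‖ ≤ ρ → x + lam • v ∈ uball n := by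
    intro x hx lam hlam
    rw [mem_ball, dist_eq_norm] at hx
    rw [mem_uball]
    calc ‖x + lam • v‖ ≤ ‖x - w₀‖ + ‖w₀‖ + ‖lam‖ * ‖v‖ := by
          rw [← norm_smul]
          calc ‖x + lam • v‖ ≤ ‖x‖ + ‖lam • v‖ := norm_add_le _ _
            _ ≤ (‖x - w₀‖ + ‖w₀‖) + ‖lam • v‖ := by
                gcongr
                calc ‖x‖ = ‖x - w₀ + w₀‖ := by rw [sub_add_cancel]
                  _ ≤ ‖x - w₀‖ + ‖w₀‖ := norm_add_le _ _
        _ ≤ ρ + a + ρ * 1 := by gcongr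
        _ < 1 := by rw [hρ]; linarith
  have hmemnorm : ∀ x ∈ ball w₀ ρ, ∀ lam : ℂ, ‖lam‖ ≤ ρ → ‖x + lam • v‖ ≤ r₁ := by
    intro x hx lam hlam
    rw [mem_ball, dist_eq_norm] at hx
    calc ‖x + lam • v‖ ≤ ‖x - w₀‖ + ‖w₀‖ + ‖lam‖ * ‖v‖ := by
          rw [← norm_smul]
          calc ‖x + lam • v‖ ≤ ‖x‖ + ‖lam • v‖ := norm_add_le _ _
            _ ≤ (‖x - w₀‖ + ‖w₀‖) + ‖lam • v‖ := by
                gcongr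
                calc ‖x‖ = ‖x - w₀ + w₀‖ := by rw [sub_add_cancel]
                  _ ≤ ‖x - w₀‖ + ‖w₀‖ := norm_add_le _ _
        _ ≤ ρ + a + ρ * 1 := by gcongr
        _ = r₁ := by rw [hr₁]; ring
  have hr₁ρ : r₁ + ρ < 1 := by rw [hr₁, hρ]; linarith
  have hr₁0 : 0 ≤ r₁ := by rw [hr₁]; positivity
  -- sup bound on f on the compact ball of radius r₁ + ρ
  obtain ⟨B, hB⟩ : ∃ B, ∀ u ∈ closedBall (0:E n) (r₁+ρ), ‖f u‖ ≤ B := by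
    apply (isCompact_closedBall (0:E n) (r₁+ρ)).exists_bound_of_continuousOn
    apply hf.continuousOn.mono
    intro u hu
    rw [mem_closedBall, dist_zero_right] at hu
    rw [mem_uball]; linarith
  have hA : ∀ u : E n, ‖u‖ ≤ r₁ → ‖fderiv ℂ f u‖ ≤ (2*B+1)/ρ :=
    fun u hu => opNorm_bound hf hρpos hr₁ρ hr₁0 hB hu
  set A := (2*B+1)/ρ with hAdef
  -- the parametrized integrand
  set c : ℝ → ℂ := circleMap 0 ρ with hc
  set F : E n → ℝ → ℂ := fun x θ => deriv (circleMap 0 ρ) θ • ((c θ)^(-2:ℤ) • f (x + c θ • v))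
    with hF
  set F' : E n → ℝ → (E n →L[ℂ] ℂ) := fun x θ =>
    (deriv (circleMap 0 ρ) θ * (c θ)^(-2:ℤ)) • fderiv ℂ f (x + c θ • v) with hF'
  have hcnorm : ∀ θ, ‖c θ‖ = ρ := by
    intro θ; rw [hc, norm_circleMap_zero]; exact abs_of_pos hρpos
  have hcne : ∀ θ, c θ ≠ 0 := by
    intro θ h0
    have := hcnorm θ; rw [h0, norm_zero] at this; exact hρpos.ne this
  have hccont : Continuous c := continuous_circleMap 0 ρ
  have hdcont : Continuous (deriv (circleMap 0 ρ)) := by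
    have : deriv (circleMap 0 ρ) = fun θ => circleMap 0 ρ θ * Complex.I :=
      funext fun θ => deriv_circleMap 0 ρ θ
    rw [this]; exact hccont.mul continuous_const
  -- Claim 1: integral representation
  have claim1 : ∀ x ∈ ball w₀ ρ,
      fderiv ℂ f x v = (2*π*Complex.I)⁻¹ • ∫ θ in (0:ℝ)..(2*π), F x θ := by
    intro x hx
    set φ : ℂ → ℂ := fun l => f (x + l • v) with hφ
    have hdφ : DifferentiableOn ℂ φ (closedBall 0 ρ) := by
      intro lam hlam
      rw [mem_closedBall, dist_zero_right] at hlam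
      exact (hasDerivAt_dir hf (hmem x hx lam hlam)).differentiableAt.differentiableWithinAt
    have hdc : DiffContOnCl ℂ φ (ball 0 ρ) :=
      DifferentiableOn.diffContOnCl (by rwa [closure_ball 0 hρpos.ne'])
    have h1 : deriv φ 0 = (2*π*Complex.I)⁻¹ • circleIntegral (fun z => (z - 0) ^ (-2:ℤ) • φ z) 0 ρ := by
      have h := hdc.deriv_eq_smul_circleIntegral hρpos
      have hne : (2*π*Complex.I : ℂ) ≠ 0 := by simp [Real.pi_ne_zero, Complex.I_ne_zero]
      rw [show circleIntegral (fun z => (z - 0) ^ (-2:ℤ) • φ z) 0 ρ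
          = circleIntegral (fun z => (1 / (z - 0) ^ 2) • φ z) 0 ρ by simp [zpow_neg],
        h, smul_smul, inv_mul_cancel₀ hne, one_smul]
    have h2 : deriv φ 0 = fderiv ℂ f x v := by
      have h3 := hasDerivAt_dir hf (u := x) (w := v) (lam := 0)
        (by simpa using hmem x hx 0 (by simpa using hρpos.le))
      simpa using h3.deriv
    rw [h2] at h1
    rw [h1, circleIntegral]
    simp only [sub_zero]
    rfl
  -- Claim 2: differentiability of the integral
  have claim2 : HasFDerivAt (fun x => (2*π*Complex.I)⁻¹ • ∫ θ in (0:ℝ)..(2*π), F x θ)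
      ((2*π*Complex.I)⁻¹ • ∫ θ in (0:ℝ)..(2*π), F' w₀ θ) w₀ := by
    have key := intervalIntegral.hasFDerivAt_integral_of_dominated_of_fderiv_le
      (𝕜 := ℂ) (μ := volume) (F := F) (F' := F') (x₀ := w₀) (a := 0) (b := 2*π)
      (bound := fun _ => ρ⁻¹ * A) (ball_mem_nhds w₀ hρpos) ?_ ?_ ?_ ?_ ?_ ?_
    · exact key.fun_const_smul _
    · -- measurability of F x for x near w₀
      filter_upwards [ball_mem_nhds w₀ hρpos] with x hx
      apply Continuous.aestronglyMeasurable
      apply hdcont.smul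
      apply Continuous.fun_smul
      · exact (hccont.zpow₀ _ (fun θ => Or.inl (hcne θ)))
      · apply hf.continuousOn.comp_continuous
        · exact continuous_const.add (hccont.smul continuous_const)
        · intro θ; exact hmem x hx (c θ) (hcnorm θ).le
    · -- integrability of F w₀
      apply Continuous.intervalIntegrable
      apply hdcont.smul
      apply Continuous.fun_smul
      · exact (hccont.zpow₀ _ (fun θ => Or.inl (hcne θ)))
      · apply hf.continuousOn.comp_continuous
        · exact continuous_const.add (hccont.smul continuous_const)
        · intro θ; exact hmem w₀ (mem_ball_self hρpos) (c θ) (hcnorm θ).le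
    · -- measurability of F' w₀
      apply AEStronglyMeasurable.fun_smul
      · exact (hdcont.mul (hccont.zpow₀ _ (fun θ => Or.inl (hcne θ)))).aestronglyMeasurable
      · apply Measurable.aestronglyMeasurable
        exact (measurable_fderiv ℂ f).comp
          (continuous_const.add (hccont.smul continuous_const)).measurable
    · -- bound on F'
      apply Filter.Eventually.of_forall
      intro θ _ x hx
      simp only [hF']
      rw [norm_smul (deriv (circleMap 0 ρ) θ * c θ ^ (-2:ℤ)) (fderiv ℂ f (x + c θ • v))]
      have h1 : ‖deriv (circleMap 0 ρ) θ * (c θ)^(-2:ℤ)‖ = ρ⁻¹ := by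
        rw [norm_mul, deriv_circleMap, norm_mul, ← hc, hcnorm, norm_zpow, hcnorm]
        simp
        rw [pow_two, mul_inv, ← mul_assoc, mul_inv_cancel₀ hρpos.ne', one_mul]
      rw [h1]
      gcongr
      · exact hA _ (hmemnorm x hx (c θ) (hcnorm θ).le)
    · exact intervalIntegrable_const
    · -- differentiability of integrand
      apply Filter.Eventually.of_forall
      intro θ _ x hx
      have hd : HasFDerivAt (fun y : E n => f (y + c θ • v)) (fderiv ℂ f (x + c θ • v)) x := by
        have inner : HasFDerivAt (fun y : E n => y + c θ • v)
            (ContinuousLinearMap.id ℂ (E n)) x := (hasFDerivAt_id x).add_const _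
        have outer : HasFDerivAt f (fderiv ℂ f (x + c θ • v)) (x + c θ • v) :=
          (hf.differentiableAt ((uball_open n).mem_nhds
            (hmem x hx (c θ) (hcnorm θ).le))).hasFDerivAt
        have := outer.comp x inner
        rw [ContinuousLinearMap.comp_id] at this
        exact this
      have := (hd.const_smul ((c θ)^(-2:ℤ))).const_smul (deriv (circleMap 0 ρ) θ)
      simp only [smul_smul] at this
      simp only [hF, hF', smul_smul]
      exact this
  exact claim2.differentiableAt.congr_of_eventuallyEq
    (by filter_upwards [ball_mem_nhds w₀ hρpos] with x hx using claim1 x hx)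

lemma hasDerivAt_ray {n : ℕ} {g : E n → ℂ} (hg : DifferentiableOn ℂ g (uball n)) {z : E n}
    {t : ℝ} (ht : t • z ∈ uball n) :
    HasDerivAt (fun s : ℝ => g (s • z)) (fderiv ℂ g (t • z) z) t := by
  have inner : HasDerivAt (fun s : ℝ => s • z) z t := by
    simpa using (hasDerivAt_id t).smul_const z
  have hF : HasFDerivAt g (fderiv ℂ g (t • z)) (t • z) :=
    (hg.differentiableAt ((uball_open n).mem_nhds ht)).hasFDerivAt
  exact (hF.restrictScalars ℝ).comp_hasDerivAt t inner

lemma rad_diffOn {n : ℕ} {f : E n → ℂ} (hf : DifferentiableOn ℂ f (uball n)) :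
    DifferentiableOn ℂ (rad n f) (uball n) := by
  intro w hw
  apply DifferentiableAt.differentiableWithinAt
  have h : DifferentiableAt ℂ
      (fun w : E n => ∑ j : Fin n, w j * fderiv ℂ f w (EuclideanSpace.single j 1)) w := by
    apply DifferentiableAt.fun_sum
    intro j _
    have h1 : DifferentiableAt ℂ (fun w : E n => w j) w :=
      (EuclideanSpace.proj (𝕜 := ℂ) (ι := Fin n) j).differentiableAt
    have h2 : DifferentiableAt ℂ (fun w : E n => fderiv ℂ f w (EuclideanSpace.single j 1)) w :=
      ((snd_diff hf (by rw [EuclideanSpace.norm_single, norm_one])).differentiableAt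
        ((uball_open n).mem_nhds hw))
    exact h1.mul h2
  exact h

lemma key {n : ℕ} {f : E n → ℂ} (hf : DifferentiableOn ℂ f (uball n)) {M : ℝ} (hM0 : 0 ≤ M)
    (hbd : ∀ w ∈ uball n, (1 - ‖w‖^2) * ‖rad n (rad n f) w‖ ≤ M)
    (h1 : ∀ u ∈ closedBall (0:E n) (7/8 : ℝ), ‖f u‖ ≤ 1)
    {r : ℝ} (hr : 1/2 ≤ r) (hr1 : r < 1) {z : E n} (hz : z ∈ uball n) :
    ‖f z - f (r • z)‖ ≤ (16 + 16*M) * Real.sqrt (1-r) := by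
  have hz1 : ‖z‖ < 1 := mem_uball.1 hz
  have hzmem : ∀ t : ℝ, |t| ≤ 1 → t • z ∈ uball n := by
    intro t ht
    rw [mem_uball, norm_smul, Real.norm_eq_abs]
    calc |t| * ‖z‖ ≤ 1 * ‖z‖ := by gcongr
      _ < 1 := by rwa [one_mul]
  set g := rad n f with hgdef
  have hg : DifferentiableOn ℂ g (uball n) := rad_diffOn hf
  -- fderiv bound on closedBall 1/2
  have hDf : ∀ u : E n, ‖u‖ ≤ 1/2 → ‖fderiv ℂ f u‖ ≤ 8 := by
    intro u hu
    have hBall : ∀ u ∈ closedBall (0:E n) (1/2 + 3/8 : ℝ), ‖f u‖ ≤ 1 := by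
      intro u hu
      apply h1 u
      rw [mem_closedBall] at hu ⊢
      linarith
    have h8 := opNorm_bound hf (B := 1) (r := 1/2) (δ := 3/8)
      (by norm_num) (by norm_num) (by norm_num) hBall hu
    have : (2*(1:ℝ)+1)/(3/8) = 8 := by norm_num
    rwa [this] at h8
  -- the boundary function
  set B : ℝ → ℝ := fun s => 8 + 2*M*(Real.log (1/2) - Real.log (1-s)) with hBdef
  -- bound for ‖g (t • z)‖
  have hgb : ∀ t : ℝ, t ∈ Set.Ico (1/2:ℝ) 1 → ‖g (t • z)‖ ≤ B t := by
    rintro t ⟨ht2, ht1⟩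
    have hmemIco : ∀ s : ℝ, s ∈ Set.Ico (1/2:ℝ) t → s • z ∈ uball n := by
      rintro s ⟨hs1, hs2⟩
      apply hzmem s
      rw [abs_of_nonneg (by linarith : (0:ℝ) ≤ s)]
      linarith
    have hmemIcc : ∀ s : ℝ, s ∈ Set.Icc (1/2:ℝ) t → s • z ∈ uball n := by
      rintro s ⟨hs1, hs2⟩
      apply hzmem s
      rw [abs_of_nonneg (by linarith : (0:ℝ) ≤ s)]
      linarith
    have main := image_norm_le_of_norm_deriv_right_le_deriv_boundary'
      (f := fun s : ℝ => g (s • z)) (f' := fun s : ℝ => fderiv ℂ g (s • z) z)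
      (a := 1/2) (b := t) (B := B) (B' := fun s => 2*M/(1-s)) ?_ ?_ ?_ ?_ ?_ ?_
    · exact (by simpa using main (Set.right_mem_Icc.2 ht2) : ‖g (t • z)‖ ≤ B t)
    · -- continuity of s ↦ g (s • z)
      intro s hs
      exact (hasDerivAt_ray hg (hmemIcc s hs)).continuousAt.continuousWithinAt
    · intro s hs
      exact (hasDerivAt_ray hg (hmemIco s hs)).hasDerivWithinAt
    · -- initial bound : ‖g ((1/2) • z)‖ ≤ B (1/2)
      have hm : ‖(1/2 : ℝ) • z‖ ≤ 1/2 := by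
        rw [norm_smul, Real.norm_eq_abs, abs_of_nonneg (by norm_num : (0:ℝ) ≤ 1/2)]
        nlinarith [norm_nonneg z]
      have heq : ‖g ((1/2:ℝ) • z)‖ = ‖fderiv ℂ f ((1/2:ℝ) • z) ((1/2:ℝ) • z)‖ := by
        rw [hgdef, rad_eq]
      have hb := (fderiv ℂ f ((1/2:ℝ) • z)).le_opNorm ((1/2:ℝ) • z)
      have hb2 : ‖fderiv ℂ f ((1/2:ℝ) • z) ((1/2:ℝ) • z)‖ ≤ 8 * (1/2) :=
        le_trans hb (mul_le_mul (hDf _ hm) hm (norm_nonneg _) (by norm_num))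
      have hBval : B (1/2) = 8 := by
        rw [hBdef]
        norm_num
      rw [hBval, heq]
      linarith
    · -- continuity of B
      intro s hs
      apply ContinuousAt.continuousWithinAt
      have hne : (1:ℝ) - s ≠ 0 := by
        have : s < 1 := lt_of_le_of_lt hs.2 ht1
        intro h; nlinarith
      have hlog : ContinuousAt (fun s : ℝ => Real.log (1-s)) s :=
        ContinuousAt.comp (Real.continuousAt_log hne)
          ((continuous_const.sub continuous_id).continuousAt)
      exact continuousAt_const.add (continuousAt_const.mul (continuousAt_const.sub hlog))
    · -- derivative of B
      intro s hs
      have hs1 : s < 1 := lt_of_lt_of_le hs.2 ht1.le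
      have hpos : (0:ℝ) < 1 - s := by linarith
      have hlog : HasDerivAt (fun s : ℝ => Real.log (1-s)) ((1-s)⁻¹ * (0-1)) s :=
        (Real.hasDerivAt_log hpos.ne').comp s ((hasDerivAt_const s (1:ℝ)).sub (hasDerivAt_id s))
      have hB : HasDerivAt B (2*M*(0 - ((1-s)⁻¹ * (0-1)))) s := by
        rw [hBdef]
        exact (((hasDerivAt_const s (Real.log (1/2))).sub hlog).const_mul (2*M)).const_add 8
      have hval : 2*M*(0 - ((1-s)⁻¹ * (0-1))) = 2*M/(1-s) := by
        field_simp
        ring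
      rw [hval] at hB
      exact hB.hasDerivWithinAt
    · -- bound on the derivative
      intro x hx
      have hx1 : x < 1 := lt_of_lt_of_le hx.2 ht1.le
      have hx2 : (1/2:ℝ) ≤ x := hx.1
      have hpos : (0:ℝ) < 1 - x := by linarith
      have hxnn : (0:ℝ) ≤ x := by linarith
      have hn : ‖(x:ℝ) • z‖ = x * ‖z‖ := by
        rw [norm_smul, Real.norm_eq_abs, abs_of_nonneg hxnn]
      have hq := hbd ((x:ℝ) • z) (hmemIco x hx)
      have hradeq : rad n g ((x:ℝ) • z) = (x:ℝ) • (fderiv ℂ g ((x:ℝ) • z) z) := by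
        rw [rad_eq]
        exact (fderiv ℂ g ((x:ℝ) • z)).map_smul_of_tower x z
      rw [hradeq, hn] at hq
      rw [norm_smul, Real.norm_eq_abs, abs_of_nonneg hxnn] at hq
      set D := ‖fderiv ℂ g ((x:ℝ) • z) z‖ with hD
      have hDnn : 0 ≤ D := norm_nonneg _
      rw [le_div_iff₀ hpos]
      have hz2 : ‖z‖^2 ≤ 1 := by nlinarith [norm_nonneg z]
      have e1 : (x * ‖z‖)^2 ≤ x := by
        calc (x * ‖z‖)^2 = x^2 * ‖z‖^2 := by ring
          _ ≤ x^2 * 1 := by gcongr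
          _ ≤ x := by nlinarith
      have e2 : (1:ℝ) - (x*‖z‖)^2 ≥ 1 - x := by linarith
      have e3 : (1 - (x*‖z‖)^2) * (x * D) ≥ (1-x) * ((1/2) * D) := by
        apply mul_le_mul e2.le.ge.le ?_ (by positivity) (by nlinarith [norm_nonneg z])
        · exact mul_le_mul hx2 le_rfl hDnn (by linarith)
      nlinarith
  -- continuity of the integrand
  have hmapsIcc : ∀ x ∈ Set.Icc r (1:ℝ), x • z ∈ uball n := by
    rintro x ⟨hx1, hx2⟩
    exact hzmem x (by rw [abs_of_nonneg (by linarith)]; exact hx2)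
  have hphicont : ContinuousOn (fun x : ℝ => fderiv ℂ f (x • z) z) (Set.uIcc r 1) := by
    rw [Set.uIcc_of_le hr1.le]
    have hc1 : ContinuousOn (fun w => fderiv ℂ f w z) (uball n) :=
      (snd_diff hf hz1.le).continuousOn
    exact hc1.comp ((continuous_id.smul continuous_const).continuousOn) hmapsIcc
  have hFTC : ∫ x in r..(1:ℝ), fderiv ℂ f (x • z) z = f ((1:ℝ) • z) - f (r • z) := by
    refine intervalIntegral.integral_eq_sub_of_hasDerivAt (a := r) (b := 1)
      (f := fun x : ℝ => f (x • z)) (f' := fun x : ℝ => fderiv ℂ f (x • z) z) ?_ ?_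
    · intro x hx
      rw [Set.uIcc_of_le hr1.le] at hx
      exact hasDerivAt_ray hf (hmapsIcc x hx)
    · exact hphicont.intervalIntegrable
  -- integrability of the dominating function
  have hint2 : IntervalIntegrable (fun t : ℝ => (1-t)^(-(1/2):ℝ)) volume r 1 := by
    have h0 := intervalIntegral.intervalIntegrable_rpow' (a := 0) (b := 1-r)
      (r := -(1/2)) (by norm_num)
    have h2 := (h0.comp_sub_left 1).symm
    simpa using h2
  have hψint : IntervalIntegrable (fun t : ℝ => 16 + 8*M*(1-t)^(-(1/2):ℝ)) volume r 1 :=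
    intervalIntegrable_const.add (hint2.const_mul (8*M))
  -- pointwise bound
  have hbound : ∀ᵐ t ∂(volume.restrict (Set.uIoc r 1)),
      ‖fderiv ℂ f (t • z) z‖ ≤ 16 + 8*M*(1-t)^(-(1/2):ℝ) := by
    have hne : ∀ᵐ t ∂(volume.restrict (Set.uIoc r 1)), t ≠ (1:ℝ) := by
      apply ae_restrict_of_ae
      rw [ae_iff]
      have hset : {a : ℝ | ¬ a ≠ 1} = {(1:ℝ)} := by ext a; simp
      rw [hset]
      exact measure_singleton 1
    have hmem' := ae_restrict_mem (μ := volume) (measurableSet_uIoc (a := r) (b := (1:ℝ)))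
    filter_upwards [hne, hmem'] with t htne htmem
    rw [Set.uIoc_of_le hr1.le] at htmem
    obtain ⟨htr, ht1⟩ := htmem
    have ht1' : t < 1 := lt_of_le_of_ne ht1 htne
    have ht12 : (1/2:ℝ) ≤ t := le_trans hr htr.le
    have hgt : ‖g (t • z)‖ = t * ‖fderiv ℂ f (t • z) z‖ := by
      rw [hgdef, rad_eq, show (fderiv ℂ f (t • z)) (t • z) = t • (fderiv ℂ f (t • z) z) from
        (fderiv ℂ f (t • z)).map_smul_of_tower t z]
      rw [norm_smul, Real.norm_eq_abs, abs_of_nonneg (by linarith)]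
    have h2g := hgb t ⟨ht12, ht1'⟩
    have hphi : ‖fderiv ℂ f (t • z) z‖ ≤ 2 * B t := by
      rw [hgt] at h2g
      nlinarith [norm_nonneg (fderiv ℂ f (t • z) z),
        mul_le_mul_of_nonneg_right ht12 (norm_nonneg (fderiv ℂ f (t • z) z))]
    have hpos : (0:ℝ) < 1 - t := by linarith
    have hrpos : (0:ℝ) < (1-t)^(-(1/2):ℝ) := Real.rpow_pos_of_pos hpos _
    have hlogle : -Real.log (1-t) ≤ 2 * (1-t)^(-(1/2):ℝ) := by
      have h01 : Real.log ((1-t)^(-(1/2):ℝ)) = -(1/2) * Real.log (1-t) :=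
        Real.log_rpow hpos _
      have h02 : Real.log ((1-t)^(-(1/2):ℝ)) ≤ (1-t)^(-(1/2):ℝ) - 1 :=
        Real.log_le_sub_one_of_pos hrpos
      linarith
    have hloghalf : Real.log (1/2) ≤ 0 := Real.log_nonpos (by norm_num) (by norm_num)
    have t1 : M * Real.log (1/2) ≤ 0 := mul_nonpos_of_nonneg_of_nonpos hM0 hloghalf
    have t2 : M * (-Real.log (1-t)) ≤ M * (2 * (1-t)^(-(1/2):ℝ)) :=
      mul_le_mul_of_nonneg_left hlogle hM0
    calc ‖fderiv ℂ f (t • z) z‖ ≤ 2 * B t := hphi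
      _ = 16 + 4*(M * Real.log (1/2)) + 4*(M * (-Real.log (1-t))) := by rw [hBdef]; ring
      _ ≤ 16 + 0 + 4*(M * (2 * (1-t)^(-(1/2):ℝ))) := by linarith
      _ = 16 + 8*M*(1-t)^(-(1/2):ℝ) := by ring
  have hnorm := intervalIntegral.norm_integral_le_abs_of_norm_le hbound hψint
  -- compute the integral of the dominating function
  have h5 : ∫ t in r..(1:ℝ), (1-t)^(-(1/2):ℝ) = ∫ u in (0:ℝ)..(1-r), u^(-(1/2):ℝ) := by
    have h6 := intervalIntegral.integral_comp_sub_left (a := r) (b := 1)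
      (fun u : ℝ => u^(-(1/2):ℝ)) 1
    simpa using h6
  have h7 : ∫ u in (0:ℝ)..(1-r), u^(-(1/2):ℝ) = 2 * Real.sqrt (1-r) := by
    rw [integral_rpow (Or.inl (by norm_num))]
    rw [Real.zero_rpow (by norm_num : (-(1/2):ℝ) + 1 ≠ 0)]
    rw [show (-(1/2):ℝ) + 1 = 1/2 by norm_num]
    rw [Real.sqrt_eq_rpow]
    ring
  have hψval : ∫ t in r..(1:ℝ), (16 + 8*M*(1-t)^(-(1/2):ℝ)) =
      16*(1-r) + 16*M*Real.sqrt (1-r) := by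
    rw [intervalIntegral.integral_add intervalIntegrable_const (hint2.const_mul (8*M)),
      intervalIntegral.integral_const, intervalIntegral.integral_const_mul, h5, h7]
    simp [smul_eq_mul]
    ring
  have hsqnn : 0 ≤ Real.sqrt (1-r) := Real.sqrt_nonneg _
  have hsq : (1-r) ≤ Real.sqrt (1-r) := by
    have hle1 : Real.sqrt (1-r) ≤ 1 := Real.sqrt_le_one.mpr (by linarith)
    have hms : Real.sqrt (1-r) * Real.sqrt (1-r) = 1-r := Real.mul_self_sqrt (by linarith)
    nlinarith
  have habs : |16*(1-r) + 16*M*Real.sqrt (1-r)| = 16*(1-r) + 16*M*Real.sqrt (1-r) := by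
    apply abs_of_nonneg
    have : 0 ≤ 16*M*Real.sqrt (1-r) := by positivity
    nlinarith
  calc ‖f z - f (r • z)‖ = ‖∫ x in r..(1:ℝ), fderiv ℂ f (x • z) z‖ := by
        rw [hFTC, one_smul]
    _ ≤ |∫ t in r..(1:ℝ), (16 + 8*M*(1-t)^(-(1/2):ℝ))| := hnorm
    _ = 16*(1-r) + 16*M*Real.sqrt (1-r) := by rw [hψval, habs]
    _ ≤ 16*Real.sqrt (1-r) + 16*M*Real.sqrt (1-r) := by nlinarith
    _ = (16 + 16*M) * Real.sqrt (1-r) := by ring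

lemma rad_zero (n : ℕ) (h : E n → ℂ) : rad n h 0 = 0 := by
  simp [rad]

lemma zero_mem_zygSet (n : ℕ) (f : E n → ℂ) : (0:ℝ) ∈ zygSet n f := by
  refine ⟨0, ?_, ?_⟩
  · rw [mem_uball]; simp
  · rw [rad_zero]; simp

/-- **Lemma 3.** A bounded sequence in the Zygmund space converging to `0` uniformly on
compact subsets of the ball converges to `0` uniformly on the whole ball. -/
theorem unif_conv_on_ball (n : ℕ) (hn : 1 ≤ n) (f : ℕ → E n → ℂ)
    (hf : ∀ k, DifferentiableOn ℂ (f k) (uball n))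
    (M : ℝ) (hM : ∀ k, memZ n (f k) ∧ zygNorm n (f k) ≤ M)
    (hconv : ∀ K : Set (E n), IsCompact K → K ⊆ uball n →
      TendstoUniformlyOn (fun k z => f k z) 0 atTop K) :
    TendstoUniformlyOn (fun k z => f k z) 0 atTop (uball n) := by
  have hsup : ∀ k, sSup (zygSet n (f k)) ≤ M := by
    intro k
    have h := (hM k).2
    rw [zygNorm] at h
    have := norm_nonneg (f k 0)
    linarith
  have hM0 : 0 ≤ M := by
    have h0 := le_csSup (hM 0).1 (zero_mem_zygSet n (f 0))
    linarith [hsup 0]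
  have hbd : ∀ k, ∀ w ∈ uball n, (1 - ‖w‖^2) * ‖rad n (rad n (f k)) w‖ ≤ M := by
    intro k w hw
    have hmem : (1 - ‖w‖^2) * ‖rad n (rad n (f k)) w‖ ∈ zygSet n (f k) :=
      ⟨w, hw, rfl⟩
    have := le_csSup (hM k).1 hmem
    linarith [hsup k]
  rw [Metric.tendstoUniformlyOn_iff]
  intro ε hε
  set C₀ : ℝ := 16 + 16*M with hC₀def
  have hC₀pos : 0 < C₀ + 1 := by rw [hC₀def]; linarith
  set θ : ℝ := ε / (2*(C₀+1)) with hθdef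
  have hθ : 0 < θ := by rw [hθdef]; positivity
  set η : ℝ := min (1/2) (θ^2) with hηdef
  have hη : 0 < η := lt_min (by norm_num) (by positivity)
  have hη2 : η ≤ 1/2 := min_le_left _ _
  set r : ℝ := 1 - η with hrdef
  have hr2 : 1/2 ≤ r := by rw [hrdef]; linarith
  have hr1 : r < 1 := by rw [hrdef]; linarith
  have hr0 : 0 ≤ r := by linarith
  have hKsub : ∀ ρ : ℝ, ρ < 1 → closedBall (0:E n) ρ ⊆ uball n := by
    intro ρ hρ u hu
    rw [mem_closedBall, dist_zero_right] at hu
    rw [mem_uball]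
    linarith
  have h78 := hconv (closedBall 0 (7/8)) (isCompact_closedBall _ _) (hKsub _ (by norm_num))
  rw [Metric.tendstoUniformlyOn_iff] at h78
  have hrK := hconv (closedBall 0 r) (isCompact_closedBall _ _) (hKsub _ hr1)
  rw [Metric.tendstoUniformlyOn_iff] at hrK
  filter_upwards [h78 1 one_pos, hrK (ε/2) (half_pos hε)] with k hk1 hk2
  intro z hzball
  have hz1 : ‖z‖ < 1 := mem_uball.1 hzball
  have h1k : ∀ u ∈ closedBall (0:E n) (7/8:ℝ), ‖f k u‖ ≤ 1 := by
    intro u hu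
    have := hk1 u hu
    rw [Pi.zero_apply, dist_zero_left] at this
    exact this.le
  have hkey := key (hf k) hM0 (hbd k) h1k hr2 hr1 hzball
  have hrz : r • z ∈ closedBall (0:E n) r := by
    rw [mem_closedBall, dist_zero_right, norm_smul, Real.norm_eq_abs, abs_of_nonneg hr0]
    nlinarith [norm_nonneg z]
  have h2 := hk2 (r • z) hrz
  rw [Pi.zero_apply, dist_zero_left] at h2 ⊢
  have hsqrt : Real.sqrt (1-r) ≤ θ := by
    rw [hrdef, sub_sub_cancel]
    calc Real.sqrt η ≤ Real.sqrt (θ^2) := Real.sqrt_le_sqrt (min_le_right _ _)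
      _ = θ := Real.sqrt_sq hθ.le
  have hhalf : C₀ * Real.sqrt (1-r) < ε/2 := by
    calc C₀ * Real.sqrt (1-r) ≤ C₀ * θ := by
          apply mul_le_mul_of_nonneg_left hsqrt (by rw [hC₀def]; linarith)
      _ < (C₀+1) * θ := by nlinarith
      _ = ε/2 := by rw [hθdef]; field_simp
  calc ‖f k z‖ = ‖f k (r • z) + (f k z - f k (r • z))‖ := by ring_nf
    _ ≤ ‖f k (r • z)‖ + ‖f k z - f k (r • z)‖ := norm_add_le _ _
    _ < ε/2 + ε/2 := add_lt_add_of_lt_of_le h2 (le_trans hkey hhalf.le)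
    _ = ε := by ring
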